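/- arXiv:2009.03119 — 2 statements merged into one kernel-verified Lean document; each statement's English description precedes it below -/
import Mathlib

section
/- Let m ≥ 1 and let G be a graph on n vertices that has no matching of size m and is maximal with this property (i.e. adding any non-edge of G creates a matching of size m). Then G is a complete blow-up of a star: there is a partition of V(G) into sets A, B₁, …, B_r (some possibly empty) such that two distinct vertices u, v are adjacent in G if and only if u ∈ A, or v ∈ A, or u and v lie in the same set B_i. -/
open SimpleGraph

variable {V : Type*} {k : ℕ}

/-- The subgraph of `G` spanned by the edges of colour `ℓ`. -/
def colourGraph (G : SimpleGraph V) (χ : Sym2 V → Fin k) (ℓ : Fin k) : SimpleGraph V where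
  Adj u v := G.Adj u v ∧ χ s(u, v) = ℓ
  symm := by
    constructor
    intro u v h
    exact ⟨h.1.symm, by rw [Sym2.eq_swap]; exact h.2⟩
  loopless := by
    constructor
    intro u h
    exact G.loopless.irrefl u h.1

/-- `M` is a matching in `H`: its pairs are edges of `H` and are pairwise vertex-disjoint. -/
def IsMatchingSet (H : SimpleGraph V) (M : Finset (V × V)) : Prop :=
  (∀ e ∈ M, H.Adj e.1 e.2) ∧
  (∀ e ∈ M, ∀ e' ∈ M, e ≠ e' →
    e.1 ≠ e'.1 ∧ e.1 ≠ e'.2 ∧ e.2 ≠ e'.1 ∧ e.2 ≠ e'.2)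

/-- `M` is a connected matching in `H`: a matching contained in one component of `H`. -/
def IsConnMatching (H : SimpleGraph V) (M : Finset (V × V)) : Prop :=
  IsMatchingSet H M ∧ ∀ e ∈ M, ∀ e' ∈ M, H.Reachable e.1 e'.1

/-- A piece of a 2-matching: a list of vertices forming either an edge or an odd cycle of `H`. -/
def IsTwoMatchPiece (H : SimpleGraph V) (l : List V) : Prop :=
  2 ≤ l.length ∧ (l.length = 2 ∨ Odd l.length) ∧ l.Nodup ∧ l.Chain' H.Adj ∧
    ∀ (h : l ≠ []), H.Adj (l.getLast h) (l.head h)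

/-- A 2-matching in `H`: a collection of pairwise vertex-disjoint edges and odd cycles. -/
def IsTwoMatching (H : SimpleGraph V) (P : List (List V)) : Prop :=
  (∀ l ∈ P, IsTwoMatchPiece H l) ∧
    P.Pairwise (fun l₁ l₂ => ∀ v ∈ l₁, v ∉ l₂)

/-- The order of a 2-matching: the number of vertices it covers. -/
def twoMatchOrder (P : List (List V)) : ℕ := (P.map List.length).sum

/-- A connected 2-matching: a 2-matching contained in one component of `H`. -/
def IsConnTwoMatching (H : SimpleGraph V) (P : List (List V)) : Prop :=
  IsTwoMatching H P ∧ ∀ l ∈ P, ∀ v ∈ l, ∀ l' ∈ P, ∀ v' ∈ l', H.Reachable v v'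

/-- The component of `H` containing the matching `M` is non-bipartite (contains an odd cycle). -/
def MatchingInNonBipComponent (H : SimpleGraph V) (M : Finset (V × V)) : Prop :=
  ∃ (w : V) (p : H.Walk w w), p.IsCycle ∧ Odd p.length ∧ ∀ e ∈ M, H.Reachable e.1 w

/-- The component of `H` containing the 2-matching `P` is non-bipartite. -/
def TwoMatchingInNonBipComponent (H : SimpleGraph V) (P : List (List V)) : Prop :=
  ∃ (w : V) (p : H.Walk w w), p.IsCycle ∧ Odd p.length ∧ ∀ l ∈ P, ∀ v ∈ l, H.Reachable v w

/-- `H` contains a cycle of length `t`. -/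
def HasCycleLen (H : SimpleGraph V) (t : ℕ) : Prop :=
  ∃ (w : V) (p : H.Walk w w), p.IsCycle ∧ p.length = t

/-- `H` contains a path on `n` vertices. -/
def HasPathOn (H : SimpleGraph V) (n : ℕ) : Prop :=
  ∃ (u v : V) (p : H.Walk u v), p.IsPath ∧ p.length + 1 = n

/-- The blow-up `F(m₁, …, m_s)` of a graph `F` on `[s]`, possibly with loops, where vertex `i`
is replaced by `m i` vertices. -/
def blowup {s : ℕ} (F : Fin s → Fin s → Prop) (hF : Symmetric F) (m : Fin s → ℕ) :
    SimpleGraph ((i : Fin s) × Fin (m i)) where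
  Adj x y := x ≠ y ∧ F x.1 y.1
  symm := by
    constructor
    intro x y h
    exact ⟨h.1.symm, hF h.2⟩
  loopless := by
    constructor
    intro x h
    exact h.1 rfl

/-- The largest even natural number which is at most `x`. -/
noncomputable def evenFloor (x : ℝ) : ℕ := 2 * ⌊x / 2⌋₊

/-- The largest odd natural number which is at most `x` (for `x ≥ 1`). -/
noncomputable def oddFloor (x : ℝ) : ℕ := 2 * ⌊(x - 1) / 2⌋₊ + 1

namespace Stmt9Aux

variable {V : Type*}

/-- `e` touches the vertex `a`. -/
def Touches (e : V × V) (a : V) : Prop := e.1 = a ∨ e.2 = a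

/-- No edge of `M` touches `a`. -/
def Avoids (M : Finset (V × V)) (a : V) : Prop := ∀ e ∈ M, ¬ Touches e a

/-- No edge of `M` touches `S`. -/
def AvoidsSet (M : Finset (V × V)) (S : Set V) : Prop := ∀ e ∈ M, e.1 ∉ S ∧ e.2 ∉ S

lemma matching_subset {H : SimpleGraph V} {M M' : Finset (V × V)} (hsub : M' ⊆ M)
    (hM : IsMatchingSet H M) : IsMatchingSet H M' :=
  ⟨fun e he => hM.1 e (hsub he), fun e he e' he' hne => hM.2 e (hsub he) e' (hsub he') hne⟩

lemma matching_unique {H : SimpleGraph V} {M : Finset (V × V)} (hM : IsMatchingSet H M)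
    {e e' : V × V} (he : e ∈ M) (he' : e' ∈ M) {a : V} (ha : Touches e a) (ha' : Touches e' a) :
    e = e' := by
  by_contra hne
  obtain ⟨h1, h2, h3, h4⟩ := hM.2 e he e' he' hne
  rcases ha with h | h <;> rcases ha' with h' | h' <;> simp_all [Touches]

lemma matching_insert [DecidableEq V] {H : SimpleGraph V} {M : Finset (V × V)}
    (hM : IsMatchingSet H M) {p : V × V} (hadj : H.Adj p.1 p.2)
    (hav : ∀ a, Touches p a → Avoids M a) :
    IsMatchingSet H (insert p M) ∧ (insert p M).card = M.card + 1 := by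
  have hpM : p ∉ M := fun h => hav p.1 (Or.inl rfl) p h (Or.inl rfl)
  refine ⟨⟨?_, ?_⟩, Finset.card_insert_of_notMem hpM⟩
  · intro e he
    rcases Finset.mem_insert.1 he with rfl | he
    · exact hadj
    · exact hM.1 e he
  · intro e1 he1 e2 he2 hne
    rcases Finset.mem_insert.1 he1 with h1eq | he1'
    · rcases Finset.mem_insert.1 he2 with h2eq | he2'
      · exact absurd (h1eq.trans h2eq.symm) hne
      · rw [h1eq]
        have h1 := hav p.1 (Or.inl rfl) e2 he2'
        have h2 := hav p.2 (Or.inr rfl) e2 he2'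
        exact ⟨fun h => h1 (Or.inl h.symm), fun h => h1 (Or.inr h.symm),
          fun h => h2 (Or.inl h.symm), fun h => h2 (Or.inr h.symm)⟩
    · rcases Finset.mem_insert.1 he2 with h2eq | he2'
      · rw [h2eq]
        have h1 := hav p.1 (Or.inl rfl) e1 he1'
        have h2 := hav p.2 (Or.inr rfl) e1 he1'
        exact ⟨fun h => h1 (Or.inl h), fun h => h2 (Or.inl h),
          fun h => h1 (Or.inr h), fun h => h2 (Or.inr h)⟩
      · exact hM.2 e1 he1' e2 he2' hne

lemma touch_decomp {H : SimpleGraph V} {p : V × V} (hadj : H.Adj p.1 p.2) {a : V}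
    (h : Touches p a) : ∃ b, H.Adj a b ∧ ∀ c, Touches p c ↔ (c = a ∨ c = b) := by
  rcases h with h | h
  · subst h
    exact ⟨p.2, hadj, fun c => by simp [Touches, eq_comm]⟩
  · subst h
    exact ⟨p.1, hadj.symm, fun c => by simp [Touches, eq_comm, or_comm]⟩

/-- The alternating-path engine lemma. -/
lemma engine (H : SimpleGraph V) :
    ∀ (n : ℕ) (M N : Finset (V × V)) (S : Set V) (y x z : V),
      M.card = n →
      IsMatchingSet H M → IsMatchingSet H N → N.card = M.card →
      Avoids N y → Avoids M x → Avoids M z →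
      x ≠ z → y ≠ x → y ≠ z →
      AvoidsSet M S → AvoidsSet N S → y ∉ S → x ∉ S → z ∉ S →
      (∃ W, IsMatchingSet H W ∧ W.card = M.card + 1 ∧ AvoidsSet W S) ∨
      (∃ W, IsMatchingSet H W ∧ W.card = M.card ∧ AvoidsSet W S ∧ Avoids W y ∧
        (Avoids W x ∨ Avoids W z)) := by
  classical
  intro n
  induction n with
  | zero =>
    intro M N S y x z hcard hM hN hNM hNy hMx hMz hxz hyx hyz hMS hNS hyS hxS hzS
    right
    refine ⟨M, hM, rfl, hMS, ?_, Or.inl hMx⟩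
    intro e he _
    have : M = ∅ := Finset.card_eq_zero.1 hcard
    simp [this] at he
  | succ n ih =>
    intro M N S y x z hcard hM hN hNM hNy hMx hMz hxz hyx hyz hMS hNS hyS hxS hzS
    by_cases hyM : Avoids M y
    · exact Or.inr ⟨M, hM, rfl, hMS, hyM, Or.inl hMx⟩
    · simp only [Avoids] at hyM
      push_neg at hyM
      obtain ⟨e, he, hey⟩ := hyM
      obtain ⟨u, hyu, heu⟩ := touch_decomp (hM.1 e he) hey
      have huy : u ≠ y := hyu.ne'
      by_cases hc2 : ∀ a, Touches e a → Avoids N a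
      · obtain ⟨hW, hWcard⟩ := matching_insert hN (hM.1 e he) hc2
        left
        refine ⟨insert e N, hW, by rw [hWcard, hNM], ?_⟩
        intro g hg
        rcases Finset.mem_insert.1 hg with hgeq | hg'
        · rw [hgeq]; exact hMS e he
        · exact hNS g hg'
      · push_neg at hc2
        obtain ⟨a, hae, haN⟩ := hc2
        simp only [Avoids] at haN
        push_neg at haN
        obtain ⟨f, hfN, hfa⟩ := haN
        have hau : a = u := by
          rcases (heu a).1 hae with rfl | rfl
          · exact absurd hfa (hNy f hfN)
          · rfl
        subst hau
        obtain ⟨v, huv, hfv⟩ := touch_decomp (hN.1 f hfN) hfa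
        have hvu : v ≠ a := huv.ne'
        have hvy : v ≠ y := fun h => hNy f hfN ((hfv y).2 (Or.inr h.symm))
        have hvS : v ∉ S := by
          have hfS := hNS f hfN
          rcases (hfv v).2 (Or.inr rfl) with h | h
          · rw [← h]; exact hfS.1
          · rw [← h]; exact hfS.2
        have hMe : ∀ g ∈ M, Touches g y ∨ Touches g a → g = e := fun g hg hgt =>
          hgt.elim (fun h => matching_unique hM hg he h hey)
                   (fun h => matching_unique hM hg he h ((heu a).2 (Or.inr rfl)))
        have hNf : ∀ g ∈ N, Touches g a ∨ Touches g v → g = f := fun g hg hgt =>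
          hgt.elim (fun h => matching_unique hN hg hfN h ((hfv a).2 (Or.inl rfl)))
                   (fun h => matching_unique hN hg hfN h ((hfv v).2 (Or.inr rfl)))
        have hux : a ≠ x := fun h => hMx e he ((heu x).2 (Or.inr h.symm))
        have huz : a ≠ z := fun h => hMz e he ((heu z).2 (Or.inr h.symm))
        by_cases hvM : Avoids M v
        · -- the path ends here with an `N`-edge into the `M`-free vertex `v`
          right
          have hav : ∀ c, Touches f c → Avoids (M.erase e) c := by
            intro c hc g hg hgc
            have hgM := Finset.mem_of_mem_erase hg
            rcases (hfv c).1 hc with rfl | rfl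
            · exact (Finset.ne_of_mem_erase hg) (hMe g hgM (Or.inr hgc))
            · exact hvM g hgM hgc
          obtain ⟨hW, hWcard⟩ :=
            matching_insert (matching_subset (Finset.erase_subset _ _) hM) (hN.1 f hfN) hav
          have hcardW : (insert f (M.erase e)).card = M.card := by
            rw [hWcard, Finset.card_erase_of_mem he]
            omega
          refine ⟨insert f (M.erase e), hW, hcardW, ?_, ?_, ?_⟩
          · intro g hg
            rcases Finset.mem_insert.1 hg with hgeq | hg'
            · rw [hgeq]; exact hNS f hfN
            · exact hMS g (Finset.mem_of_mem_erase hg')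
          · intro g hg hgy
            rcases Finset.mem_insert.1 hg with hgeq | hg'
            · rw [hgeq] at hgy
              rcases (hfv y).1 hgy with h | h
              · exact huy h.symm
              · exact hvy h.symm
            · exact Finset.ne_of_mem_erase hg' (hMe g (Finset.mem_of_mem_erase hg') (Or.inl hgy))
          · have hgen : ∀ w, Avoids M w → v ≠ w → a ≠ w →
                Avoids (insert f (M.erase e)) w := by
              intro w hMw hvw huw g hg hgw
              rcases Finset.mem_insert.1 hg with hgeq | hg'
              · rw [hgeq] at hgw
                rcases (hfv w).1 hgw with h | h
                · exact huw h.symm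
                · exact hvw h.symm
              · exact hMw g (Finset.mem_of_mem_erase hg') hgw
            rcases eq_or_ne v x with rfl | hvx
            · exact Or.inr (hgen z hMz hxz huz)
            · exact Or.inl (hgen x hMx hvx hux)
        · -- `v` is `M`-covered: recurse along the alternating path
          simp only [Avoids] at hvM
          push_neg at hvM
          obtain ⟨g₀, hg₀M, hg₀v⟩ := hvM
          have hvx : v ≠ x := fun h => hMx g₀ hg₀M (h ▸ hg₀v)
          have hvz : v ≠ z := fun h => hMz g₀ hg₀M (h ▸ hg₀v)
          have hMecard : (M.erase e).card = n := by
            rw [Finset.card_erase_of_mem he, hcard]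
            omega
          have hNecard : (N.erase f).card = (M.erase e).card := by
            rw [Finset.card_erase_of_mem hfN, Finset.card_erase_of_mem he, hNM]
          have hMe' := matching_subset (Finset.erase_subset e M) hM
          have hNe' := matching_subset (Finset.erase_subset f N) hN
          have hNev : Avoids (N.erase f) v := fun g hg hgv =>
            Finset.ne_of_mem_erase hg (hNf g (Finset.mem_of_mem_erase hg) (Or.inr hgv))
          have hMex : Avoids (M.erase e) x := fun g hg => hMx g (Finset.mem_of_mem_erase hg)
          have hMez : Avoids (M.erase e) z := fun g hg => hMz g (Finset.mem_of_mem_erase hg)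
          have hMeS : AvoidsSet (M.erase e) (S ∪ {y, a}) := by
            intro g hg
            have hgM := Finset.mem_of_mem_erase hg
            have hge : g ≠ e := Finset.ne_of_mem_erase hg
            constructor
            · intro hmem
              simp only [Set.mem_union, Set.mem_insert_iff, Set.mem_singleton_iff] at hmem
              rcases hmem with h | h | h
              · exact (hMS g hgM).1 h
              · exact hge (hMe g hgM (Or.inl (Or.inl h)))
              · exact hge (hMe g hgM (Or.inr (Or.inl h)))
            · intro hmem
              simp only [Set.mem_union, Set.mem_insert_iff, Set.mem_singleton_iff] at hmem
              rcases hmem with h | h | h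
              · exact (hMS g hgM).2 h
              · exact hge (hMe g hgM (Or.inl (Or.inr h)))
              · exact hge (hMe g hgM (Or.inr (Or.inr h)))
          have hNeS : AvoidsSet (N.erase f) (S ∪ {y, a}) := by
            intro g hg
            have hgN := Finset.mem_of_mem_erase hg
            have hgf : g ≠ f := Finset.ne_of_mem_erase hg
            constructor
            · intro hmem
              simp only [Set.mem_union, Set.mem_insert_iff, Set.mem_singleton_iff] at hmem
              rcases hmem with h | h | h
              · exact (hNS g hgN).1 h
              · exact hNy g hgN (Or.inl h)
              · exact hgf (hNf g hgN (Or.inl (Or.inl h)))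
            · intro hmem
              simp only [Set.mem_union, Set.mem_insert_iff, Set.mem_singleton_iff] at hmem
              rcases hmem with h | h | h
              · exact (hNS g hgN).2 h
              · exact hNy g hgN (Or.inr h)
              · exact hgf (hNf g hgN (Or.inl (Or.inr h)))
          have hvS' : v ∉ S ∪ {y, a} := by
            simp only [Set.mem_union, Set.mem_insert_iff, Set.mem_singleton_iff]
            push_neg
            exact ⟨hvS, hvy, hvu⟩
          have hxS' : x ∉ S ∪ {y, a} := by
            simp only [Set.mem_union, Set.mem_insert_iff, Set.mem_singleton_iff]
            push_neg
            exact ⟨hxS, fun h => hyx h.symm, fun h => hux h.symm⟩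
          have hzS' : z ∉ S ∪ {y, a} := by
            simp only [Set.mem_union, Set.mem_insert_iff, Set.mem_singleton_iff]
            push_neg
            exact ⟨hzS, fun h => hyz h.symm, fun h => huz h.symm⟩
          rcases ih (M.erase e) (N.erase f) (S ∪ {y, a}) v x z hMecard hMe' hNe' hNecard
              hNev hMex hMez hxz hvx hvz hMeS hNeS hvS' hxS' hzS' with
            ⟨W₀, hW₀, hW₀card, hW₀S⟩ | ⟨W₀, hW₀, hW₀card, hW₀S, hW₀v, hW₀xz⟩
          · -- augmenting: put back the `M`-edge `e`
            have havW : ∀ c, Touches e c → Avoids W₀ c := by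
              intro c hc g hg hgc
              have hgS := hW₀S g hg
              rcases (heu c).1 hc with rfl | rfl
              · rcases hgc with h | h
                · exact hgS.1 (by simp [h])
                · exact hgS.2 (by simp [h])
              · rcases hgc with h | h
                · exact hgS.1 (by simp [h])
                · exact hgS.2 (by simp [h])
            obtain ⟨hW, hWc⟩ := matching_insert hW₀ (hM.1 e he) havW
            left
            refine ⟨insert e W₀, hW, ?_, ?_⟩
            · rw [hWc, hW₀card, hMecard, hcard]
            · intro g hg
              rcases Finset.mem_insert.1 hg with hgeq | hg'
              · rw [hgeq]; exact hMS e he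
              · have hgS := hW₀S g hg'
                exact ⟨fun h => hgS.1 (Set.mem_union_left _ h),
                  fun h => hgS.2 (Set.mem_union_left _ h)⟩
          · -- even case: put back the `N`-edge `f`
            have havW : ∀ c, Touches f c → Avoids W₀ c := by
              intro c hc g hg hgc
              rcases (hfv c).1 hc with rfl | rfl
              · rcases hgc with h | h
                · exact (hW₀S g hg).1 (by simp [h])
                · exact (hW₀S g hg).2 (by simp [h])
              · exact hW₀v g hg hgc
            obtain ⟨hW, hWc⟩ := matching_insert hW₀ (hN.1 f hfN) havW
            right
            refine ⟨insert f W₀, hW, ?_, ?_, ?_, ?_⟩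
            · rw [hWc, hW₀card, hMecard, hcard]
            · intro g hg
              rcases Finset.mem_insert.1 hg with hgeq | hg'
              · rw [hgeq]; exact hNS f hfN
              · have hgS := hW₀S g hg'
                exact ⟨fun h => hgS.1 (Set.mem_union_left _ h),
                  fun h => hgS.2 (Set.mem_union_left _ h)⟩
            · intro g hg hgy
              rcases Finset.mem_insert.1 hg with hgeq | hg'
              · rw [hgeq] at hgy
                rcases (hfv y).1 hgy with h | h
                · exact huy h.symm
                · exact hvy h.symm
              · rcases hgy with h | h
                · exact (hW₀S g hg').1 (by simp [h])
                · exact (hW₀S g hg').2 (by simp [h])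
            · have hgen : ∀ w, v ≠ w → a ≠ w → Avoids W₀ w → Avoids (insert f W₀) w := by
                intro w hvw haw hWw g hg hgw
                rcases Finset.mem_insert.1 hg with hgeq | hg'
                · rw [hgeq] at hgw
                  rcases (hfv w).1 hgw with h | h
                  · exact haw h.symm
                  · exact hvw h.symm
                · exact hWw g hg' hgw
              rcases hW₀xz with hWx | hWz
              · exact Or.inl (hgen x hvx hux hWx)
              · exact Or.inr (hgen z hvz huz hWz)

/-- From a maximum matching of `G + ab` extract a matching of `G` of size `m - 1`
avoiding `a` and `b`. -/
lemma reduce (G : SimpleGraph V) (m : ℕ)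
    (hno : ∀ M : Finset (V × V), IsMatchingSet G M → M.card ≠ m)
    {a b : V} {M : Finset (V × V)}
    (hM : IsMatchingSet (G ⊔ SimpleGraph.fromEdgeSet {s(a, b)}) M)
    (hMcard : M.card = m) :
    ∃ M', IsMatchingSet G M' ∧ M'.card = m - 1 ∧ Avoids M' a ∧ Avoids M' b := by
  classical
  have hadj : ∀ e : V × V, (G ⊔ SimpleGraph.fromEdgeSet {s(a, b)}).Adj e.1 e.2 →
      G.Adj e.1 e.2 ∨ (Touches e a ∧ Touches e b) := by
    intro e h
    rw [SimpleGraph.sup_adj, SimpleGraph.fromEdgeSet_adj] at h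
    rcases h with h | ⟨hmem, hne⟩
    · exact Or.inl h
    · right
      simp only [Set.mem_singleton_iff, Sym2.eq_iff] at hmem
      rcases hmem with ⟨h1, h2⟩ | ⟨h1, h2⟩
      · exact ⟨Or.inl h1, Or.inr h2⟩
      · exact ⟨Or.inr h2, Or.inl h1⟩
  by_cases hall : ∀ e ∈ M, G.Adj e.1 e.2
  · exact absurd hMcard (hno M ⟨hall, hM.2⟩)
  · push_neg at hall
    obtain ⟨e, heM, henot⟩ := hall
    have hetouch := (hadj e (hM.1 e heM)).resolve_left henot
    refine ⟨M.erase e, ⟨?_, fun g hg g' hg' =>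
      hM.2 g (Finset.mem_of_mem_erase hg) g' (Finset.mem_of_mem_erase hg')⟩, ?_, ?_, ?_⟩
    · intro g hg
      have hgM := Finset.mem_of_mem_erase hg
      rcases hadj g (hM.1 g hgM) with h | ⟨hga, _⟩
      · exact h
      · exact absurd (matching_unique hM hgM heM hga hetouch.1) (Finset.ne_of_mem_erase hg)
    · rw [Finset.card_erase_of_mem heM, hMcard]
    · intro g hg hga
      exact Finset.ne_of_mem_erase hg
        (matching_unique hM (Finset.mem_of_mem_erase hg) heM hga hetouch.1)
    · intro g hg hgb
      exact Finset.ne_of_mem_erase hg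
        (matching_unique hM (Finset.mem_of_mem_erase hg) heM hgb hetouch.2)

/-- The key transitivity lemma. -/
lemma key (G : SimpleGraph V) (m : ℕ) (hm : 1 ≤ m)
    (hno : ∀ M : Finset (V × V), IsMatchingSet G M → M.card ≠ m)
    (hmax : ∀ u v : V, u ≠ v → ¬ G.Adj u v →
      ∃ M : Finset (V × V),
        IsMatchingSet (G ⊔ SimpleGraph.fromEdgeSet {s(u, v)}) M ∧ M.card = m) :
    ∀ x y z : V, G.Adj x y → G.Adj y z → x ≠ z → (∃ w, w ≠ y ∧ ¬ G.Adj y w) → G.Adj x z := by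
  classical
  intro x y z hxy hyz hxz hw
  by_contra hnadj
  obtain ⟨w, hwy, hynw⟩ := hw
  obtain ⟨M₁, hM₁, hM₁card⟩ := hmax x z hxz hnadj
  obtain ⟨M, hMm, hMcard, hMx, hMz⟩ := reduce G m hno hM₁ hM₁card
  obtain ⟨M₂, hM₂, hM₂card⟩ := hmax y w (Ne.symm hwy) hynw
  obtain ⟨N, hNm, hNcard, hNy, _⟩ := reduce G m hno hM₂ hM₂card
  have hres := engine G M.card M N ∅ y x z rfl hMm hNm (by rw [hNcard, hMcard]) hNy hMx hMz
    hxz hxy.ne' hyz.ne (fun e _ => ⟨Set.notMem_empty _, Set.notMem_empty _⟩)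
    (fun e _ => ⟨Set.notMem_empty _, Set.notMem_empty _⟩)
    (Set.notMem_empty y) (Set.notMem_empty x) (Set.notMem_empty z)
  rcases hres with ⟨W, hW, hWcard, _⟩ | ⟨W, hW, hWcard, _, hWy, hWxz⟩
  · exact hno W hW (by rw [hWcard, hMcard]; omega)
  · rcases hWxz with hWx | hWz
    · have hins := matching_insert hW (show G.Adj (x, y).1 (x, y).2 from hxy)
        (fun c hc => by
          rcases hc with h | h
          · exact h ▸ hWx
          · exact h ▸ hWy)
      exact hno _ hins.1 (by rw [hins.2, hWcard, hMcard]; omega)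
    · have hins := matching_insert hW (show G.Adj (y, z).1 (y, z).2 from hyz)
        (fun c hc => by
          rcases hc with h | h
          · exact h ▸ hWy
          · exact h ▸ hWz)
      exact hno _ hins.1 (by rw [hins.2, hWcard, hMcard]; omega)

end Stmt9Aux

/-- Lemma `lem:ge`: a graph maximal without a matching of size `m` is a
complete blow-up of a star, with centre `A` and leaves `B 0, …, B (r-1)`. -/
theorem stmt_9 {V : Type*} [Fintype V] (m : ℕ) (hm : 1 ≤ m) (G : SimpleGraph V)
    (hno : ∀ M : Finset (V × V), IsMatchingSet G M → M.card ≠ m)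
    (hmax : ∀ u v : V, u ≠ v → ¬ G.Adj u v →
      ∃ M : Finset (V × V),
        IsMatchingSet (G ⊔ SimpleGraph.fromEdgeSet {s(u, v)}) M ∧ M.card = m) :
    ∃ (A : Set V) (r : ℕ) (B : Fin r → Set V),
      (A ∪ ⋃ i, B i) = Set.univ ∧
      (∀ i, Disjoint A (B i)) ∧
      (∀ i j, i ≠ j → Disjoint (B i) (B j)) ∧
      ∀ u v : V, u ≠ v →
        (G.Adj u v ↔ u ∈ A ∨ v ∈ A ∨ ∃ i, u ∈ B i ∧ v ∈ B i) := by
  classical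
  set A : Set V := {v | ∀ u, u ≠ v → G.Adj v u} with hA
  have hkey : ∀ x y z : V, G.Adj x y → G.Adj y z → x ≠ z → y ∉ A → G.Adj x z := by
    intro x y z h1 h2 h3 h4
    refine Stmt9Aux.key G m hm hno hmax x y z h1 h2 h3 ?_
    simp only [hA, Set.mem_setOf_eq] at h4
    push_neg at h4
    obtain ⟨u, hu1, hu2⟩ := h4
    exact ⟨u, hu1, hu2⟩
  let s : Setoid {v : V // v ∉ A} :=
    ⟨fun p q => p.1 = q.1 ∨ G.Adj p.1 q.1,
     ⟨fun p => Or.inl rfl,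
      fun h => h.elim (fun h => Or.inl h.symm) (fun h => Or.inr h.symm),
      fun {p q r} hpq hqr => by
        rcases hpq with h | h
        · rw [h]; exact hqr
        · rcases hqr with h' | h'
          · rw [← h']; exact Or.inr h
          · rcases eq_or_ne p.1 r.1 with he | hne
            · exact Or.inl he
            · exact Or.inr (hkey p.1 q.1 r.1 h h' hne q.2)⟩⟩
  haveI : Finite (Quotient s) :=
    Finite.of_surjective (Quotient.mk s) (fun q => Quotient.exists_rep q)
  haveI : Fintype (Quotient s) := Fintype.ofFinite _
  let eqv : Fin (Fintype.card (Quotient s)) ≃ Quotient s := (Fintype.equivFin (Quotient s)).symm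
  refine ⟨A, Fintype.card (Quotient s),
    fun i => {v | ∃ h : v ∉ A, Quotient.mk s ⟨v, h⟩ = eqv i}, ?_, ?_, ?_, ?_⟩
  · refine Set.eq_univ_of_forall fun v => ?_
    by_cases hv : v ∈ A
    · exact Set.mem_union_left _ hv
    · exact Set.mem_union_right _
        (Set.mem_iUnion.2 ⟨eqv.symm (Quotient.mk s ⟨v, hv⟩),
          hv, (Equiv.apply_symm_apply eqv _).symm⟩)
  · intro i
    rw [Set.disjoint_left]
    rintro v hvA ⟨hv, _⟩
    exact hv hvA
  · intro i j hij
    rw [Set.disjoint_left]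
    rintro v ⟨hv1, hq1⟩ ⟨hv2, hq2⟩
    apply hij
    apply eqv.injective
    rw [← hq1, ← hq2]
  · intro u v huv
    constructor
    · intro hadj
      by_cases hu : u ∈ A
      · exact Or.inl hu
      by_cases hv : v ∈ A
      · exact Or.inr (Or.inl hv)
      · refine Or.inr (Or.inr ⟨eqv.symm (Quotient.mk s ⟨u, hu⟩),
          ⟨hu, (Equiv.apply_symm_apply eqv _).symm⟩, ⟨hv, ?_⟩⟩)
        rw [Equiv.apply_symm_apply]
        exact Quot.sound (Or.inr hadj.symm)
    · rintro (hu | hv | ⟨i, ⟨hu, hq1⟩, ⟨hv, hq2⟩⟩)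
      · exact hu v (Ne.symm huv)
      · exact (hv u huv).symm
      · have hrel := Quotient.exact (hq1.trans hq2.symm)
        rcases hrel with h | h
        · exact absurd h huv
        · exact h
end

section
/- Let m ≥ 0 and let G be a connected graph on n ≥ 2m+2 vertices that has no matching of size m+1. Then there exists a vertex u of G such that the graph G − u (obtained by deleting u) has no matching of size m. -/
open SimpleGraph

variable {V : Type*} {k : ℕ}

section Aux
set_option linter.unusedSectionVars false
variable [DecidableEq V] {G : SimpleGraph V} {M N : Finset (V × V)}

/-- Vertices covered by a set of pairs. -/
def mcov (M : Finset (V × V)) : Finset V := M.image Prod.fst ∪ M.image Prod.snd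

lemma mem_mcov {v : V} : v ∈ mcov M ↔ ∃ e ∈ M, e.1 = v ∨ e.2 = v := by
  simp only [mcov, Finset.mem_union, Finset.mem_image]
  aesop

lemma fst_mem_mcov {e : V × V} (h : e ∈ M) : e.1 ∈ mcov M :=
  mem_mcov.mpr ⟨e, h, Or.inl rfl⟩

lemma snd_mem_mcov {e : V × V} (h : e ∈ M) : e.2 ∈ mcov M :=
  mem_mcov.mpr ⟨e, h, Or.inr rfl⟩

lemma card_mcov_le : (mcov M).card ≤ 2 * M.card := by
  refine le_trans (Finset.card_union_le _ _) ?_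
  have h1 := Finset.card_image_le (s := M) (f := Prod.fst)
  have h2 := Finset.card_image_le (s := M) (f := Prod.snd)
  omega

lemma IsMatchingSet.subset (hM : IsMatchingSet G M) (h : N ⊆ M) : IsMatchingSet G N :=
  ⟨fun e he => hM.1 e (h he), fun e he e' he' hne => hM.2 e (h he) e' (h he') hne⟩

lemma IsMatchingSet.eq_of_shares (hM : IsMatchingSet G M) {e e' : V × V}
    (he : e ∈ M) (he' : e' ∈ M)
    (h : e.1 = e'.1 ∨ e.1 = e'.2 ∨ e.2 = e'.1 ∨ e.2 = e'.2) : e = e' := by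
  by_contra hne
  obtain ⟨h1, h2, h3, h4⟩ := hM.2 e he e' he' hne
  tauto

lemma mem_mcov_erase (hM : IsMatchingSet G M) {e : V × V} (he : e ∈ M) {v : V} :
    v ∈ mcov (M.erase e) ↔ v ∈ mcov M ∧ v ≠ e.1 ∧ v ≠ e.2 := by
  constructor
  · intro h
    obtain ⟨e', he', hv⟩ := mem_mcov.mp h
    rw [Finset.mem_erase] at he'
    refine ⟨mem_mcov.mpr ⟨e', he'.2, hv⟩, ?_, ?_⟩ <;>
    · rintro rfl
      exact he'.1 (hM.eq_of_shares he'.2 he (by tauto))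
  · rintro ⟨h, h1, h2⟩
    obtain ⟨e', he', hv⟩ := mem_mcov.mp h
    exact mem_mcov.mpr ⟨e', Finset.mem_erase.mpr
      ⟨fun hh => by subst hh; tauto, he'⟩, hv⟩

lemma isMatchingSet_insert (hM : IsMatchingSet G M) {a b : V} (hab : G.Adj a b)
    (ha : a ∉ mcov M) (hb : b ∉ mcov M) :
    IsMatchingSet G (insert (a, b) M) ∧ (insert (a, b) M).card = M.card + 1 ∧
      (∀ v, v ∈ mcov (insert (a, b) M) ↔ v = a ∨ v = b ∨ v ∈ mcov M) := by
  have hnm : (a, b) ∉ M := fun h => ha (fst_mem_mcov h)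
  refine ⟨⟨?_, ?_⟩, Finset.card_insert_of_notMem hnm, ?_⟩
  · intro e he
    rcases Finset.mem_insert.mp he with rfl | he
    · exact hab
    · exact hM.1 e he
  · intro e he e' he' hne
    rcases Finset.mem_insert.mp he with rfl | he <;>
      rcases Finset.mem_insert.mp he' with rfl | he'
    · exact absurd rfl hne
    · refine ⟨fun h => ha ?_, fun h => ha ?_, fun h => hb ?_, fun h => hb ?_⟩
      · rw [show a = e'.1 from h]; exact fst_mem_mcov he'
      · rw [show a = e'.2 from h]; exact snd_mem_mcov he'
      · rw [show b = e'.1 from h]; exact fst_mem_mcov he'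
      · rw [show b = e'.2 from h]; exact snd_mem_mcov he'
    · refine ⟨fun h => ha ?_, fun h => hb ?_, fun h => ha ?_, fun h => hb ?_⟩
      · rw [show a = e.1 from h.symm]; exact fst_mem_mcov he
      · rw [show b = e.1 from h.symm]; exact fst_mem_mcov he
      · rw [show a = e.2 from h.symm]; exact snd_mem_mcov he
      · rw [show b = e.2 from h.symm]; exact snd_mem_mcov he
    · exact hM.2 e he e' he' hne
  · intro v
    simp only [mem_mcov, Finset.mem_insert]
    constructor
    · rintro ⟨e, (rfl | he), hv⟩
      · rcases hv with h | h
        · exact Or.inl h.symm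
        · exact Or.inr (Or.inl h.symm)
      · exact Or.inr (Or.inr ⟨e, he, hv⟩)
    · rintro (rfl | rfl | h)
      · exact ⟨(v, b), Or.inl rfl, Or.inl rfl⟩
      · exact ⟨(a, v), Or.inl rfl, Or.inr rfl⟩
      · obtain ⟨e, he, hv⟩ := h
        exact ⟨e, Or.inr he, hv⟩

lemma extract (hM : IsMatchingSet G M) {t : V} (ht : t ∈ mcov M) :
    ∃ (b : V) (M₁ : Finset (V × V)), IsMatchingSet G M₁ ∧ M₁.card + 1 = M.card ∧
      (∀ v, v ∈ mcov M₁ ↔ v ∈ mcov M ∧ v ≠ t ∧ v ≠ b) ∧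
      G.Adj t b ∧ b ∈ mcov M ∧ b ≠ t := by
  obtain ⟨e, he, hv⟩ := mem_mcov.mp ht
  obtain ⟨x, y⟩ := e
  have hadj : G.Adj x y := hM.1 _ he
  rcases hv with h | h
  · subst h
    exact ⟨y, M.erase (x, y), hM.subset (Finset.erase_subset _ _),
      Finset.card_erase_add_one he, fun v => mem_mcov_erase hM he,
      hadj, snd_mem_mcov he, hadj.ne'⟩
  · subst h
    refine ⟨x, M.erase (x, y), hM.subset (Finset.erase_subset _ _),
      Finset.card_erase_add_one he, fun v => ?_, hadj.symm, fst_mem_mcov he, hadj.ne⟩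
    rw [mem_mcov_erase hM he]
    tauto

lemma exchange (G : SimpleGraph V) :
    ∀ (n : ℕ) (M N : Finset (V × V)), M.card ≤ n → IsMatchingSet G M → IsMatchingSet G N →
      ∀ t, t ∈ mcov M → t ∉ mcov N →
      (∃ P, IsMatchingSet G P ∧ P.card = N.card + 1 ∧ ∀ v ∈ mcov P, v ∈ mcov M ∨ v ∈ mcov N) ∨
      (∃ M' x, IsMatchingSet G M' ∧ M'.card = M.card ∧ t ∉ mcov M' ∧ x ∈ mcov N ∧ x ∉ mcov M ∧
        ∀ v ∈ mcov M', (v ∈ mcov M ∧ v ≠ t) ∨ v = x) := by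
  intro n
  induction n with
  | zero =>
    intro M N hn hM hN t ht htN
    rw [Nat.le_zero, Finset.card_eq_zero] at hn
    subst hn
    obtain ⟨e, he, -⟩ := mem_mcov.mp ht
    exact absurd he (Finset.notMem_empty e)
  | succ n ih =>
    intro M N hn hM hN t ht htN
    obtain ⟨b, M₁, hM₁, hcard₁, hcov₁, hadj_tb, hbM, hbt⟩ := extract hM ht
    by_cases hbN : b ∈ mcov N
    · obtain ⟨c, N₁, hN₁, hcardN₁, hcovN₁, hadj_bc, hcN, hcb⟩ := extract hN hbN
      have hct : c ≠ t := fun h => htN (h ▸ hcN)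
      by_cases hcM : c ∈ mcov M
      · have hcM₁ : c ∈ mcov M₁ := (hcov₁ c).mpr ⟨hcM, hct, hcb⟩
        have hcN₁ : c ∉ mcov N₁ := fun h => ((hcovN₁ c).mp h).2.2 rfl
        rcases ih M₁ N₁ (by omega) hM₁ hN₁ c hcM₁ hcN₁ with
          ⟨P, hP, hPcard, hPcov⟩ | ⟨M₂, x, hM₂, hM₂card, hcM₂, hxN₁, hxM₁, hcovM₂⟩
        · have htP : t ∉ mcov P := fun h => by
            rcases hPcov t h with h' | h'
            · exact ((hcov₁ t).mp h').2.1 rfl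
            · exact htN ((hcovN₁ t).mp h').1
          have hbP : b ∉ mcov P := fun h => by
            rcases hPcov b h with h' | h'
            · exact ((hcov₁ b).mp h').2.2 rfl
            · exact ((hcovN₁ b).mp h').2.1 rfl
          obtain ⟨hPm, hPc, hPcov'⟩ := isMatchingSet_insert hP hadj_tb htP hbP
          left
          refine ⟨insert (t, b) P, hPm, by omega, fun v hv => ?_⟩
          rcases (hPcov' v).mp hv with rfl | rfl | hvP
          · exact Or.inl ht
          · exact Or.inl hbM
          · rcases hPcov v hvP with h | h
            · exact Or.inl ((hcov₁ v).mp h).1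
            · exact Or.inr ((hcovN₁ v).mp h).1
        · have hxN : x ∈ mcov N := ((hcovN₁ x).mp hxN₁).1
          have hxb : x ≠ b := ((hcovN₁ x).mp hxN₁).2.1
          have hxt : x ≠ t := fun h => htN (h ▸ hxN)
          have hxM : x ∉ mcov M := fun h => hxM₁ ((hcov₁ x).mpr ⟨h, hxt, hxb⟩)
          have hbM₂ : b ∉ mcov M₂ := fun h => by
            rcases hcovM₂ b h with ⟨h1, -⟩ | h1
            · exact ((hcov₁ b).mp h1).2.2 rfl
            · exact hxb h1.symm
          obtain ⟨hm', hc', hcov'⟩ := isMatchingSet_insert hM₂ hadj_bc hbM₂ hcM₂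
          right
          refine ⟨insert (b, c) M₂, x, hm', by omega, fun h => ?_, hxN, hxM, fun v hv => ?_⟩
          · rcases (hcov' t).mp h with h' | h' | h'
            · exact hbt h'.symm
            · exact hct h'.symm
            · rcases hcovM₂ t h' with ⟨h1, -⟩ | h1
              · exact ((hcov₁ t).mp h1).2.1 rfl
              · exact hxt h1.symm
          · rcases (hcov' v).mp hv with rfl | rfl | h'
            · exact Or.inl ⟨hbM, hbt⟩
            · exact Or.inl ⟨hcM, hct⟩
            · rcases hcovM₂ v h' with ⟨h1, -⟩ | h1
              · exact Or.inl ⟨((hcov₁ v).mp h1).1, ((hcov₁ v).mp h1).2.1⟩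
              · exact Or.inr h1
      · have hbM₁ : b ∉ mcov M₁ := fun h => ((hcov₁ b).mp h).2.2 rfl
        have hcM₁ : c ∉ mcov M₁ := fun h => hcM ((hcov₁ c).mp h).1
        obtain ⟨hm', hc', hcov'⟩ := isMatchingSet_insert hM₁ hadj_bc hbM₁ hcM₁
        right
        refine ⟨insert (b, c) M₁, c, hm', by omega, fun h => ?_, hcN, hcM, fun v hv => ?_⟩
        · rcases (hcov' t).mp h with h' | h' | h'
          · exact hbt h'.symm
          · exact hct h'.symm
          · exact ((hcov₁ t).mp h').2.1 rfl
        · rcases (hcov' v).mp hv with rfl | rfl | h'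
          · exact Or.inl ⟨hbM, hbt⟩
          · exact Or.inr rfl
          · exact Or.inl ⟨((hcov₁ v).mp h').1, ((hcov₁ v).mp h').2.1⟩
    · obtain ⟨hm', hc', hcov'⟩ := isMatchingSet_insert hN hadj_tb htN hbN
      left
      refine ⟨insert (t, b) N, hm', by omega, fun v hv => ?_⟩
      rcases (hcov' v).mp hv with rfl | rfl | h
      · exact Or.inl ht
      · exact Or.inl hbM
      · exact Or.inr h
end Aux

/-- Corollary `cor:ge-remove-vx`: a connected graph on at least `2m+2`
vertices with no matching of size `m+1` has a vertex whose removal leaves no matching of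
size `m`. -/
theorem stmt_11 {V : Type*} [Fintype V] (m : ℕ) (G : SimpleGraph V)
    (hconn : G.Connected) (hcard : 2 * m + 2 ≤ Fintype.card V)
    (hno : ∀ M : Finset (V × V), IsMatchingSet G M → M.card ≠ m + 1) :
    ∃ u : V, ∀ M : Finset (↥{v | v ≠ u} × ↥{v | v ≠ u}),
      IsMatchingSet (G.induce {v | v ≠ u}) M → M.card ≠ m := by
    classical
  by_contra hcon
  push_neg at hcon
  have hbound : ∀ M : Finset (V × V), IsMatchingSet G M → M.card ≤ m := by
    intro M hM
    by_contra h
    push_neg at h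
    obtain ⟨M', hsub, hcard'⟩ := Finset.exists_subset_card_eq (show m + 1 ≤ M.card by omega)
    exact hno M' (hM.subset hsub) hcard'
  have HG : ∀ u : V, ∃ M : Finset (V × V), IsMatchingSet G M ∧ M.card = m ∧ u ∉ mcov M := by
    intro u
    obtain ⟨M, hM, hMcard⟩ := hcon u
    have hinj : Function.Injective
        (fun e : (↥{v | v ≠ u} × ↥{v | v ≠ u}) => ((e.1 : V), (e.2 : V))) := by
      intro a b hab
      have h1 := congrArg Prod.fst hab
      have h2 := congrArg Prod.snd hab
      exact Prod.ext (Subtype.ext h1) (Subtype.ext h2)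
    refine ⟨M.image (fun e => ((e.1 : V), (e.2 : V))), ⟨?_, ?_⟩, ?_, ?_⟩
    · intro e he
      obtain ⟨e', he', rfl⟩ := Finset.mem_image.mp he
      exact hM.1 e' he'
    · intro e he e' he' hne
      obtain ⟨f, hf, rfl⟩ := Finset.mem_image.mp he
      obtain ⟨f', hf', rfl⟩ := Finset.mem_image.mp he'
      have hff' : f ≠ f' := fun h => hne (by rw [h])
      obtain ⟨h1, h2, h3, h4⟩ := hM.2 f hf f' hf' hff'
      exact ⟨fun h => h1 (Subtype.ext h), fun h => h2 (Subtype.ext h),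
        fun h => h3 (Subtype.ext h), fun h => h4 (Subtype.ext h)⟩
    · rw [Finset.card_image_of_injective _ hinj, hMcard]
    · intro hu
      obtain ⟨e, he, hv⟩ := mem_mcov.mp hu
      obtain ⟨f, hf, rfl⟩ := Finset.mem_image.mp he
      rcases hv with h | h
      · exact f.1.2 h
      · exact f.2.2 h
  have hVne : Nonempty V := Fintype.card_pos_iff.mp (by omega)
  set D : Set ℕ := {d | ∃ (M : Finset (V × V)) (a b : V), IsMatchingSet G M ∧ M.card = m ∧
    a ∉ mcov M ∧ b ∉ mcov M ∧ a ≠ b ∧ G.dist a b = d} with hD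
  have hmiss : ∀ M : Finset (V × V), IsMatchingSet G M → M.card = m →
      ∃ a b : V, a ∉ mcov M ∧ b ∉ mcov M ∧ a ≠ b := by
    intro M hM hMc
    have h1 : (mcov M).card ≤ 2 * m := by
      have := card_mcov_le (M := M); omega
    have h2 : 1 < (mcov M)ᶜ.card := by
      rw [Finset.card_compl]; omega
    obtain ⟨a, ha, b, hb, hab⟩ := Finset.one_lt_card.mp h2
    exact ⟨a, b, Finset.mem_compl.mp ha, Finset.mem_compl.mp hb, hab⟩
  have hDne : D.Nonempty := by
    obtain ⟨M, hM, hMc, -⟩ := HG (Classical.arbitrary V)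
    obtain ⟨a, b, ha, hb, hab⟩ := hmiss M hM hMc
    exact ⟨G.dist a b, M, a, b, hM, hMc, ha, hb, hab, rfl⟩
  have hmin : ∀ d ∈ D, sInf D ≤ d := fun d hd => Nat.sInf_le hd
  obtain ⟨M, u, v, hM, hMc, huM, hvM, huv, hdist⟩ := Nat.sInf_mem hDne
  have hdpos : 0 < sInf D := hdist ▸ hconn.pos_dist_of_ne huv
  have hd2 : 2 ≤ sInf D := by
    rcases Nat.lt_or_ge (sInf D) 2 with h | h
    · have h1 : sInf D = 1 := by omega
      have hadj : G.Adj u v := dist_eq_one_iff_adj.mp (hdist.trans h1)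
      obtain ⟨hm', hc', -⟩ := isMatchingSet_insert hM hadj huM hvM
      have := hbound _ hm'
      omega
    · exact h
  obtain ⟨p, hp⟩ := hconn.exists_walk_length_eq_dist u v
  cases p with
  | nil => exact huv rfl
  | @cons _ w _ hadj q =>
    rw [SimpleGraph.Walk.length_cons, hdist] at hp
    have hqlen := SimpleGraph.dist_le q
    have hdut : G.dist u w ≤ 1 := by
      simpa using SimpleGraph.dist_le (SimpleGraph.Walk.cons hadj SimpleGraph.Walk.nil)
    have htu : w ≠ u := by
      intro h
      have h2 : G.dist u v ≤ q.length := h ▸ SimpleGraph.dist_le q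
      omega
    have htv : w ≠ v := by
      intro h
      have h2 : G.dist u v ≤ 1 := h ▸ hdut
      omega
    have hwM : w ∈ mcov M := by
      by_contra hwM
      have hmem : G.dist u w ∈ D := ⟨M, u, w, hM, hMc, huM, hwM, fun h => htu h.symm, rfl⟩
      have := hmin _ hmem
      omega
    obtain ⟨N, hN, hNc, hwN⟩ := HG w
    have hduw : G.dist w u ≤ 1 := by rw [SimpleGraph.dist_comm]; exact hdut
    have hdwv : G.dist w v ≤ sInf D - 1 := by omega
    have huN : u ∈ mcov N := by
      by_contra huN
      have hmem : G.dist w u ∈ D := ⟨N, w, u, hN, hNc, hwN, huN, htu, rfl⟩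
      have := hmin _ hmem
      omega
    have hvN : v ∈ mcov N := by
      by_contra hvN
      have hmem : G.dist w v ∈ D := ⟨N, w, v, hN, hNc, hwN, hvN, htv, rfl⟩
      have := hmin _ hmem
      omega
    rcases exchange G M.card M N le_rfl hM hN w hwM hwN with
      ⟨P, hP, hPc, -⟩ | ⟨M', x, hM', hM'c, hwM', hxN, hxM, hcovM'⟩
    · have := hbound P hP
      omega
    · by_cases hxu : x = u
      · have hvM' : v ∉ mcov M' := fun h => by
          rcases hcovM' v h with ⟨h1, -⟩ | h1
          · exact hvM h1
          · exact huv (h1.trans hxu).symm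
        have hmem : G.dist w v ∈ D := ⟨M', w, v, hM', hM'c.trans hMc, hwM', hvM', htv, rfl⟩
        have := hmin _ hmem
        omega
      · have huM' : u ∉ mcov M' := fun h => by
          rcases hcovM' u h with ⟨h1, -⟩ | h1
          · exact huM h1
          · exact hxu h1.symm
        have hmem : G.dist w u ∈ D := ⟨M', w, u, hM', hM'c.trans hMc, hwM', huM', htu, rfl⟩
        have := hmin _ hmem
        omega
end
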